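/- Let a₁,…,aₘ ∈ ℚⁿ have square-free common denominator q = p₁⋯pₛ with distinct primes pⱼ, let A be the matrix with rows q·aᵢ, and let rank_j denote the rank of A over 𝔽_{pⱼ}. Then the covolume of the lattice Λ = ⟨ℤⁿ, a₁,…,aₘ⟩_ℤ equals p₁^{−rank₁} · p₂^{−rank₂} ⋯ pₛ^{−rankₛ}. -/

import Mathlib

/-- The integer lattice ℤⁿ viewed as a ℤ-submodule of ℚⁿ. -/
def intLattice (n : ℕ) : Submodule ℤ (Fin n → ℚ) :=
  Submodule.span ℤ (Set.range fun i => (Pi.single i 1 : Fin n → ℚ))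

open Matrix Submodule

lemma mem_intLattice {n : ℕ} {v : Fin n → ℚ} :
    v ∈ intLattice n ↔ ∀ j, ∃ k : ℤ, v j = (k : ℚ) := by
  constructor
  · intro hv
    induction hv using Submodule.span_induction with
    | mem x hx =>
      obtain ⟨i, rfl⟩ := hx
      intro j
      by_cases h : j = i
      · exact ⟨1, by subst h; simp⟩
      · exact ⟨0, by simp [Pi.single_apply, h]⟩
    | zero => exact fun j => ⟨0, by simp⟩
    | add x y _ _ hx hy =>
      intro j
      obtain ⟨k, hk⟩ := hx j; obtain ⟨l, hl⟩ := hy j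
      exact ⟨k + l, by simp [hk, hl]⟩
    | smul c x _ hx =>
      intro j
      obtain ⟨k, hk⟩ := hx j
      exact ⟨c * k, by simp [hk]⟩
  · intro h
    choose k hk using h
    have hv : v = ∑ j, (k j : ℤ) • (Pi.single j 1 : Fin n → ℚ) := by
      funext j'
      simp only [Finset.sum_apply, Pi.smul_apply, Pi.single_apply, smul_ite, smul_zero]
      rw [Finset.sum_ite_eq Finset.univ j']
      simp [hk j']
    rw [hv]
    exact Submodule.sum_mem _ fun j _ =>
      Submodule.smul_mem _ _ (Submodule.subset_span ⟨j, rfl⟩)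


lemma cardRangeVecMul (m n p : ℕ) [Fact p.Prime] (B : Matrix (Fin m) (Fin n) (ZMod p)) :
    Nat.card (LinearMap.range (Matrix.vecMulLinear B)) = p ^ B.rank := by
  rw [range_vecMulLinear, Matrix.rank_eq_finrank_span_row]
  haveI : Fintype ↥(Submodule.span (ZMod p) (Set.range B.row)) := Fintype.ofFinite _
  rw [Nat.card_eq_fintype_card, Module.card_eq_pow_finrank (K := ZMod p), ZMod.card]

lemma partB (m n q : ℕ) (hqsf : Squarefree q)
    (A : Matrix (Fin m) (Fin n) ℤ) :
    Nat.card (LinearMap.range (Matrix.vecMulLinear (A.map (Int.cast : ℤ → ZMod q)))) =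
      ∏ p ∈ q.primeFactors, p ^ (A.map (Int.cast : ℤ → ZMod p)).rank := by
  classical
  set Aq : Matrix (Fin m) (Fin n) (ZMod q) := A.map (Int.cast : ℤ → ZMod q) with hAq
  have hq : (∏ p : q.primeFactors, (p : ℕ)) = q := by
    rw [Finset.prod_coe_sort q.primeFactors (fun p => p)]
    exact Nat.prod_primeFactors_of_squarefree hqsf
  have hcop : Pairwise (Function.onFun Nat.Coprime fun p : q.primeFactors => (p : ℕ)) := by
    intro p p' hne
    exact (Nat.coprime_primes (Nat.prime_of_mem_primeFactors p.2)
      (Nat.prime_of_mem_primeFactors p'.2)).mpr fun h => hne (Subtype.ext h)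
  haveI : ∀ p : q.primeFactors, Fact (Nat.Prime (p : ℕ)) :=
    fun p => ⟨Nat.prime_of_mem_primeFactors p.2⟩
  set e : ZMod q ≃+* Π p : q.primeFactors, ZMod (p : ℕ) :=
    (ZMod.ringEquivCongr hq.symm).trans (ZMod.prodEquivPi _ hcop) with he
  set F : (Fin n → ZMod q) ≃ Π p : q.primeFactors, (Fin n → ZMod (p : ℕ)) :=
    (Equiv.piCongrRight fun _ => e.toEquiv).trans
      (Equiv.piComm fun (_ : Fin n) (p : q.primeFactors) => ZMod (p : ℕ)) with hF
  set f : (p : q.primeFactors) → (ZMod q →+* ZMod (p : ℕ)) :=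
    fun p => (Pi.evalRingHom (fun p : q.primeFactors => ZMod (p : ℕ)) p).comp
      (e : ZMod q →+* Π p : q.primeFactors, ZMod (p : ℕ)) with hf
  have hFapply : ∀ (y : Fin n → ZMod q) (p : q.primeFactors) (j : Fin n),
      F y p j = f p (y j) := fun y p j => rfl
  have hAqp : ∀ p : q.primeFactors,
      Aq.map (f p) = A.map (Int.cast : ℤ → ZMod (p : ℕ)) := by
    intro p
    ext i j
    simp [hAq, Matrix.map_apply, map_intCast]
  have himg : ∀ y : Fin n → ZMod q,
      y ∈ LinearMap.range (Matrix.vecMulLinear Aq) ↔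
        ∀ p : q.primeFactors,
          F y p ∈ LinearMap.range
            (Matrix.vecMulLinear (A.map (Int.cast : ℤ → ZMod (p : ℕ)))) := by
    intro y
    constructor
    · rintro ⟨x, rfl⟩ p
      refine ⟨fun i => f p (x i), ?_⟩
      funext j
      rw [Matrix.vecMulLinear_apply, hFapply, Matrix.vecMulLinear_apply]
      have h' := RingHom.map_vecMul (f p) Aq x j
      rw [hAqp p] at h'
      simpa [Function.comp_def] using h'.symm
    · intro h
      choose x hx using h
      refine ⟨fun i => e.symm (fun p => x p i), ?_⟩
      apply F.injective
      funext p j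
      rw [hFapply, Matrix.vecMulLinear_apply]
      have h' := RingHom.map_vecMul (f p) Aq (fun i => e.symm (fun p => x p i)) j
      rw [hAqp p] at h'
      have hfe : (⇑(f p) ∘ fun i => e.symm (fun p => x p i)) = x p := by
        funext i
        show (e (e.symm (fun p => x p i))) p = x p i
        rw [RingEquiv.apply_symm_apply]
      rw [hfe] at h'
      rw [h']
      have := congrFun (hx p) j
      rw [Matrix.vecMulLinear_apply] at this
      rw [this, hFapply]
  set G : ↥(LinearMap.range (Matrix.vecMulLinear Aq)) ≃
      Π p : q.primeFactors,
        ↥(LinearMap.range (Matrix.vecMulLinear (A.map (Int.cast : ℤ → ZMod (p : ℕ))))) :=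
    { toFun := fun y p => ⟨F y.1 p, (himg y.1).mp y.2 p⟩
      invFun := fun z => ⟨F.symm (fun p => (z p).1), by
        refine (himg _).mpr fun p => ?_
        rw [F.apply_symm_apply]
        exact (z p).2⟩
      left_inv := fun y => Subtype.ext (F.symm_apply_apply y.1)
      right_inv := fun z => funext fun p =>
        Subtype.ext (congrFun (F.apply_symm_apply fun p => (z p).1) p) } with hG
  rw [Nat.card_congr G, Nat.card_pi]
  rw [← Finset.prod_coe_sort q.primeFactors (fun p => p ^ (A.map (Int.cast : ℤ → ZMod p)).rank)]
  exact Finset.prod_congr rfl fun p _ => by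
    exact cardRangeVecMul m n p (A.map (Int.cast : ℤ → ZMod (p : ℕ)))

/-- det Λ = ∏ⱼ pⱼ^{−rankⱼ}, stated equivalently as
[Λ : ℤⁿ] = ∏_{p ∣ q} p^{rank_p(A)} for square-free common denominator q. -/
theorem stmt6 (n m : ℕ) (a : Fin m → (Fin n → ℚ)) (q : ℕ) (hq0 : 0 < q)
    (hqsf : Squarefree q)
    (A : Matrix (Fin m) (Fin n) ℤ)
    (hA : ∀ i j, (q : ℚ) * a i j = (A i j : ℚ)) :
    Nat.card
      ((intLattice n ⊔ Submodule.span ℤ (Set.range a) : Submodule ℤ (Fin n → ℚ)) ⧸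
        Submodule.comap (intLattice n ⊔ Submodule.span ℤ (Set.range a)).subtype (intLattice n)) =
      ∏ p ∈ q.primeFactors, p ^ (A.map (Int.cast : ℤ → ZMod p)).rank := by
  classical
  set Λ : Submodule ℤ (Fin n → ℚ) := intLattice n ⊔ Submodule.span ℤ (Set.range a) with hΛ
  set N : Submodule ℤ Λ := Submodule.comap Λ.subtype (intLattice n) with hN
  -- the linear combination map
  set combo : (Fin m → ℤ) →ₗ[ℤ] (Fin n → ℚ) :=
    { toFun := fun x => ∑ i, x i • a i
      map_add' := by intro x y; simp [add_smul, Finset.sum_add_distrib]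
      map_smul' := by
        intro c x
        simp only [RingHom.id_apply, Finset.smul_sum]
        refine Finset.sum_congr rfl fun i _ => ?_
        rw [Pi.smul_apply, smul_assoc] } with hcombo
  have hcombo_apply : ∀ x j, combo x j = ∑ i, (x i : ℚ) * a i j := by
    intro x j
    simp [hcombo, Finset.sum_apply]
  have ha_mem : ∀ i, a i ∈ Λ := fun i =>
    (le_sup_right : Submodule.span ℤ (Set.range a) ≤ Λ) (Submodule.subset_span ⟨i, rfl⟩)
  have hcombo_mem : ∀ x, combo x ∈ Λ := fun x =>
    show (∑ i, x i • a i) ∈ Λ from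
      Submodule.sum_mem _ fun i _ => Submodule.smul_mem _ _ (ha_mem i)
  have hcombo_single : ∀ i, combo (Pi.single i 1) = a i := by
    intro i
    show (∑ k, (Pi.single i 1 : Fin m → ℤ) k • a k) = a i
    rw [Finset.sum_eq_single i]
    · simp
    · intro k _ hk; simp [Pi.single_eq_of_ne hk]
    · simp
  set ψ : (Fin m → ℤ) →ₗ[ℤ] (Λ ⧸ N) := N.mkQ ∘ₗ (combo.codRestrict Λ hcombo_mem) with hψ
  -- ψ is surjective
  have key : ∀ v ∈ Λ, ∃ x : Fin m → ℤ, v - combo x ∈ intLattice n := by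
    intro v hv
    have hΛspan : Λ = Submodule.span ℤ
        ((Set.range fun i => (Pi.single i 1 : Fin n → ℚ)) ∪ Set.range a) := by
      rw [Submodule.span_union]; rfl
    rw [hΛspan] at hv
    induction hv using Submodule.span_induction with
    | mem x hx =>
      rcases hx with h | h
      · exact ⟨0, by simpa [intLattice] using Submodule.subset_span h⟩
      · obtain ⟨i, rfl⟩ := h
        exact ⟨Pi.single i 1, by simp [hcombo_single i]⟩
    | zero => exact ⟨0, by simp⟩
    | add x y _ _ ihx ihy =>
      obtain ⟨x1, h1⟩ := ihx; obtain ⟨x2, h2⟩ := ihy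
      refine ⟨x1 + x2, ?_⟩
      have : x + y - combo (x1 + x2) = (x - combo x1) + (y - combo x2) := by
        rw [map_add]; abel
      rw [this]
      exact add_mem h1 h2
    | smul c x _ ihx =>
      obtain ⟨x1, h1⟩ := ihx
      refine ⟨c • x1, ?_⟩
      have : c • x - combo (c • x1) = c • (x - combo x1) := by
        rw [LinearMap.map_smul, smul_sub]
      rw [this]
      exact Submodule.smul_mem _ _ h1
  have hsurj : Function.Surjective ψ := by
    intro y
    obtain ⟨⟨v, hv⟩, rfl⟩ := N.mkQ_surjective y
    obtain ⟨x, hx⟩ := key v hv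
    refine ⟨x, ?_⟩
    rw [hψ]
    show N.mkQ ⟨combo x, hcombo_mem x⟩ = N.mkQ ⟨v, hv⟩
    rw [Submodule.mkQ_apply, Submodule.mkQ_apply, Submodule.Quotient.eq]
    show (⟨combo x, hcombo_mem x⟩ - ⟨v, hv⟩ : Λ) ∈ N
    rw [hN, Submodule.mem_comap]
    show combo x - v ∈ intLattice n
    have : combo x - v = -(v - combo x) := by abel
    rw [this]
    exact neg_mem hx
  -- the reduction-mod-q matrix map
  set Aq : Matrix (Fin m) (Fin n) (ZMod q) := A.map (Int.cast : ℤ → ZMod q) with hAq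
  set r : (Fin m → ℤ) →ₗ[ℤ] (Fin m → ZMod q) :=
    { toFun := fun x i => ((x i : ℤ) : ZMod q)
      map_add' := by intro x y; funext i; simp
      map_smul' := by intro c x; funext i; simp [zsmul_eq_mul] } with hr
  set θ : (Fin m → ℤ) →ₗ[ℤ] (Fin n → ZMod q) :=
    ((Matrix.vecMulLinear Aq).restrictScalars ℤ) ∘ₗ r with hθ
  have hθ_apply : ∀ x, θ x = (fun i => ((x i : ℤ) : ZMod q)) ᵥ* Aq := by
    intro x; rfl
  -- kernels agree
  have hqQ : (q : ℚ) ≠ 0 := by exact_mod_cast hq0.ne'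
  have hker : LinearMap.ker ψ = LinearMap.ker θ := by
    ext x
    have hmkψ : ψ x = N.mkQ ⟨combo x, hcombo_mem x⟩ := rfl
    have h1 : x ∈ LinearMap.ker ψ ↔ combo x ∈ intLattice n := by
      rw [LinearMap.mem_ker, hmkψ, Submodule.mkQ_apply, Submodule.Quotient.mk_eq_zero, hN,
        Submodule.mem_comap]
      rfl
    have h2 : x ∈ LinearMap.ker θ ↔ ∀ j, (q : ℤ) ∣ (x ᵥ* A) j := by
      rw [LinearMap.mem_ker, hθ_apply]
      have hcast : ∀ j, ((fun i => ((x i : ℤ) : ZMod q)) ᵥ* Aq) j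
          = (((x ᵥ* A) j : ℤ) : ZMod q) := by
        intro j
        have h' := RingHom.map_vecMul (Int.castRingHom (ZMod q)) A x j
        simpa [Function.comp_def, hAq] using h'.symm
      constructor
      · intro h j
        have := congrFun h j
        rw [hcast] at this
        exact (ZMod.intCast_zmod_eq_zero_iff_dvd _ _).mp this
      · intro h
        funext j
        rw [hcast]
        exact (ZMod.intCast_zmod_eq_zero_iff_dvd _ _).mpr (h j)
    rw [h1, h2, mem_intLattice]
    have hbridge : ∀ j, (((x ᵥ* A) j : ℤ) : ℚ) = q * combo x j := by
      intro j
      rw [hcombo_apply]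
      show ((∑ i, x i * A i j : ℤ) : ℚ) = _
      push_cast
      rw [Finset.mul_sum]
      refine Finset.sum_congr rfl fun i _ => ?_
      rw [← hA i j]; ring
    constructor
    · intro h j
      obtain ⟨k, hk⟩ := h j
      have : (((x ᵥ* A) j : ℤ) : ℚ) = ((q * k : ℤ) : ℚ) := by
        rw [hbridge j, hk]; push_cast; ring
      exact ⟨k, by exact_mod_cast this⟩
    · intro h j
      obtain ⟨k, hk⟩ := h j
      refine ⟨k, ?_⟩
      have : (q : ℚ) * combo x j = (q : ℚ) * k := by
        rw [← hbridge j, hk]; push_cast; ring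
      exact mul_left_cancel₀ hqQ this
  -- reduce card of quotient to card of range of θ
  have e1 : Nat.card (Λ ⧸ N) = Nat.card (LinearMap.range θ) := by
    calc Nat.card (Λ ⧸ N)
        = Nat.card ((Fin m → ℤ) ⧸ LinearMap.ker ψ) :=
          Nat.card_congr (ψ.quotKerEquivOfSurjective hsurj).toEquiv.symm
      _ = Nat.card ((Fin m → ℤ) ⧸ LinearMap.ker θ) := by rw [hker]
      _ = Nat.card (LinearMap.range θ) := Nat.card_congr θ.quotKerEquivRange.toEquiv
  -- range of θ equals range of vecMulLinear Aq
  have hrsurj : Function.Surjective r := by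
    intro y
    refine ⟨fun i => (ZMod.intCast_surjective (y i)).choose, funext fun i => ?_⟩
    exact (ZMod.intCast_surjective (y i)).choose_spec
  have e2 : Nat.card (LinearMap.range θ) =
      Nat.card (LinearMap.range (Matrix.vecMulLinear Aq)) := by
    apply Nat.card_congr
    apply Equiv.setCongr
    ext y
    constructor
    · rintro ⟨x, rfl⟩
      exact ⟨r x, rfl⟩
    · rintro ⟨x', rfl⟩
      obtain ⟨x, rfl⟩ := hrsurj x'
      exact ⟨x, rfl⟩
  rw [e1, e2, hAq]
  exact partB m n q hqsf A
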